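/- Consider a multi-armed bandit satisfying Hypothesis RN (each q^k nonnegative, transient and substochastic). Suppose state i ∈ N is weakly preferable to every other state in N, and let k = b(i) be its bandit. Then it is optimal to play bandit k at every multi-state that includes state i: there exists a stationary nonrandomized policy δ with V^δ(s) = F(s) for every multi-state s, and δ(s) = k for every multi-state s with s_k = i. -/

import Mathlib

set_option linter.unusedSectionVars false
set_option maxHeartbeats 1000000


open Matrix Filter

open scoped Classical

section Bandit

variable {K : ℕ} {N : Fin K → Type*}

/-- Transition-rate matrix on multi-states induced by the stationary nonrandomized policy
`δ`: `Q^δ(s,t) = q^{δ(s)}(s_{δ(s)}, t_{δ(s)})` if `t_j = s_j` for all `j ≠ δ(s)`, else `0`. -/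
noncomputable def Qpol [∀ k, Fintype (N k)] [∀ k, DecidableEq (N k)]
    (q : ∀ k, Matrix (N k) (N k) ℝ) (δ : (∀ k, N k) → Fin K) :
    Matrix (∀ k, N k) (∀ k, N k) ℝ :=
  fun s t => if (∀ j, j ≠ δ s → t j = s j) then q (δ s) (s (δ s)) (t (δ s)) else 0

/-- Reward vector of policy `δ`: `R^δ(s) = r(s_{δ(s)})`. -/
def Rpol (r : ∀ k, N k → ℝ) (δ : (∀ k, N k) → Fin K) : (∀ k, N k) → ℝ :=
  fun s => r (δ s) (s (δ s))

/-- Expected utility vector of policy `δ`: `V^δ = (I − Q^δ)⁻¹ R^δ`. -/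
noncomputable def Vpol [∀ k, Fintype (N k)] [∀ k, DecidableEq (N k)]
    (q : ∀ k, Matrix (N k) (N k) ℝ) (r : ∀ k, N k → ℝ) (δ : (∀ k, N k) → Fin K) :
    (∀ k, N k) → ℝ :=
  (1 - Qpol q δ)⁻¹ *ᵥ Rpol r δ

/-- Amplification of the state `x.2` of bandit `x.1`. -/
noncomputable def amplS [∀ k, Fintype (N k)] (q : ∀ k, Matrix (N k) (N k) ℝ)
    (x : Σ k, N k) : ℝ := ∑ j, q x.1 x.2 j

/-- Category of a state under Hypothesis RN. -/
noncomputable def catS [∀ k, Fintype (N k)] (q : ∀ k, Matrix (N k) (N k) ℝ)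
    (r : ∀ k, N k → ℝ) (x : Σ k, N k) : ℕ :=
  if amplS q x < 1 then 2 else if 0 ≤ r x.1 x.2 then 1 else 3

/-- State `x` is weakly preferable to state `y`. -/
noncomputable def WeaklyPrefS [∀ k, Fintype (N k)] (q : ∀ k, Matrix (N k) (N k) ℝ)
    (r : ∀ k, N k → ℝ) (x y : Σ k, N k) : Prop :=
  r x.1 x.2 + amplS q x * r y.1 y.2 > r y.1 y.2 + amplS q y * r x.1 x.2 ∨
    (r x.1 x.2 + amplS q x * r y.1 y.2 = r y.1 y.2 + amplS q y * r x.1 x.2 ∧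
      catS q r x ≤ catS q r y)

end Bandit

section Aux

variable {S : Type*} [Fintype S] [DecidableEq S]

lemma matPow_nonneg {M : Matrix S S ℝ} (h : ∀ i j, 0 ≤ M i j) (t : ℕ) :
    ∀ i j, 0 ≤ (M ^ t) i j := by
  induction t with
  | zero => intro i j; simp [Matrix.one_apply]; positivity
  | succ t ih =>
    intro i j
    rw [pow_succ, Matrix.mul_apply]
    exact Finset.sum_nonneg fun l _ => mul_nonneg (ih i l) (h l j)

lemma mulVec_mono {M : Matrix S S ℝ} (h : ∀ i j, 0 ≤ M i j) {x y : S → ℝ}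
    (hxy : ∀ i, x i ≤ y i) : ∀ i, (M *ᵥ x) i ≤ (M *ᵥ y) i := by
  intro i
  exact Finset.sum_le_sum fun j _ => mul_le_mul_of_nonneg_left (hxy j) (h i j)

lemma mulVec_nonneg {M : Matrix S S ℝ} (h : ∀ i j, 0 ≤ M i j) {x : S → ℝ}
    (hx : ∀ i, 0 ≤ x i) : ∀ i, 0 ≤ (M *ᵥ x) i := by
  intro i
  exact Finset.sum_nonneg fun j _ => mul_nonneg (h i j) (hx j)

lemma tendsto_pow_mulVec {M : Matrix S S ℝ}
    (hMt : ∀ i j, Tendsto (fun t : ℕ => (M ^ t) i j) atTop (nhds 0)) (x : S → ℝ) (i : S) :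
    Tendsto (fun t : ℕ => ((M ^ t) *ᵥ x) i) atTop (nhds 0) := by
  have : Tendsto (fun t : ℕ => ∑ j, (M ^ t) i j * x j) atTop (nhds (∑ j : S, 0)) := by
    apply tendsto_finset_sum
    intro j _
    simpa using (hMt i j).mul_const (x j)
  simpa [Matrix.mulVec, dotProduct] using this

lemma isUnit_one_sub_det {M : Matrix S S ℝ}
    (hMt : ∀ i j, Tendsto (fun t : ℕ => (M ^ t) i j) atTop (nhds 0)) :
    IsUnit (1 - M).det := by
  rw [isUnit_iff_ne_zero]
  intro hdet
  obtain ⟨v, hv0, hv⟩ := (Matrix.exists_mulVec_eq_zero_iff).2 hdet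
  have hMv : M *ᵥ v = v := by
    have := hv
    rw [Matrix.sub_mulVec, Matrix.one_mulVec, sub_eq_zero] at this
    exact this.symm
  have hpow : ∀ t : ℕ, (M ^ t) *ᵥ v = v := by
    intro t
    induction t with
    | zero => simp
    | succ t ih => rw [pow_succ', ← Matrix.mulVec_mulVec, ih, hMv]
  apply hv0
  funext i
  have h1 : Tendsto (fun t : ℕ => ((M ^ t) *ᵥ v) i) atTop (nhds 0) := tendsto_pow_mulVec hMt v i
  have h2 : (fun t : ℕ => ((M ^ t) *ᵥ v) i) = fun _ => v i := by
    funext t; rw [hpow]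
  rw [h2] at h1
  have := tendsto_nhds_unique h1 tendsto_const_nhds
  simpa using this.symm

lemma one_sub_inv_mulVec_nonneg {M : Matrix S S ℝ} (h0 : ∀ i j, 0 ≤ M i j)
    (hMt : ∀ i j, Tendsto (fun t : ℕ => (M ^ t) i j) atTop (nhds 0)) {x : S → ℝ}
    (hx : ∀ i, 0 ≤ x i) : ∀ i, 0 ≤ ((1 - M)⁻¹ *ᵥ x) i := by
  set v := (1 - M)⁻¹ *ᵥ x with hvdef
  have hinv : (1 - M) *ᵥ v = x := by
    rw [hvdef, Matrix.mulVec_mulVec, Matrix.mul_nonsing_inv _ (isUnit_one_sub_det hMt),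
      Matrix.one_mulVec]
  have hv : ∀ i, v i = (M *ᵥ v) i + x i := by
    intro i
    have := congrFun hinv i
    rw [Matrix.sub_mulVec, Matrix.one_mulVec] at this
    simp only [Pi.sub_apply] at this
    linarith
  have key : ∀ t : ℕ, ∀ i, ((M ^ t) *ᵥ v) i ≤ v i := by
    intro t
    induction t with
    | zero => intro i; simp
    | succ t ih =>
      intro i
      have h1 : (M ^ (t + 1)) *ᵥ v = (M ^ t) *ᵥ (M *ᵥ v) := by
        rw [pow_succ, ← Matrix.mulVec_mulVec]
      have h2 : ∀ j, (M *ᵥ v) j ≤ v j := by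
        intro j; rw [hv j]; linarith [hx j]
      calc ((M ^ (t + 1)) *ᵥ v) i = ((M ^ t) *ᵥ (M *ᵥ v)) i := by rw [h1]
        _ ≤ ((M ^ t) *ᵥ v) i := mulVec_mono (matPow_nonneg h0 t) h2 i
        _ ≤ v i := ih i
  intro i
  exact le_of_tendsto (tendsto_pow_mulVec hMt v i) (Filter.Eventually.of_forall (fun t => key t i))

end Aux

section Bandit2

variable {K : ℕ} {N : Fin K → Type*} [∀ k, Fintype (N k)] [∀ k, DecidableEq (N k)]

lemma sum_ite_update (s : ∀ k, N k) (k : Fin K) (g : (∀ k, N k) → ℝ) :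
    ∑ t : ∀ k, N k, (if (∀ j, j ≠ k → t j = s j) then g t else 0)
      = ∑ j : N k, g (Function.update s k j) := by
  rw [← Finset.sum_filter]
  apply Finset.sum_nbij' (fun t => t k) (fun j => Function.update s k j)
  · intro t ht
    exact Finset.mem_univ _
  · intro j hj
    simp only [Finset.mem_filter, Finset.mem_univ, true_and]
    intro j' hj'
    exact Function.update_of_ne hj' _ _
  · intro t ht
    simp only [Finset.mem_filter, Finset.mem_univ, true_and] at ht
    funext j'
    rcases eq_or_ne j' k with rfl | hne
    · simp
    · rw [Function.update_of_ne hne, ht j' hne]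
  · intro j hj
    simp
  · intro t ht
    simp only [Finset.mem_filter, Finset.mem_univ, true_and] at ht
    congr 1
    funext j'
    rcases eq_or_ne j' k with rfl | hne
    · simp
    · rw [Function.update_of_ne hne, ht j' hne]

lemma Qpol_mulVec (q : ∀ k, Matrix (N k) (N k) ℝ) (δ : (∀ k, N k) → Fin K)
    (f : (∀ k, N k) → ℝ) (s : ∀ k, N k) :
    (Qpol q δ *ᵥ f) s
      = ∑ j : N (δ s), q (δ s) (s (δ s)) j * f (Function.update s (δ s) j) := by
  have : (Qpol q δ *ᵥ f) s
      = ∑ t : ∀ k, N k, (if (∀ j, j ≠ δ s → t j = s j)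
          then q (δ s) (s (δ s)) (t (δ s)) * f t else 0) := by
    simp only [Matrix.mulVec, dotProduct, Qpol, ite_mul, zero_mul]
  rw [this, sum_ite_update s (δ s) (fun t => q (δ s) (s (δ s)) (t (δ s)) * f t)]
  congr 1
  funext j
  rw [Function.update_self]

lemma Qpol_nonneg (q : ∀ k, Matrix (N k) (N k) ℝ) (hnn : ∀ k i j, 0 ≤ q k i j)
    (δ : (∀ k, N k) → Fin K) : ∀ s t, 0 ≤ Qpol q δ s t := by
  intro s t
  unfold Qpol
  split
  · exact hnn _ _ _
  · exact le_refl 0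

end Bandit2

section Bandit3

variable {K : ℕ} {N : Fin K → Type*} [∀ k, Fintype (N k)] [∀ k, DecidableEq (N k)]
  [∀ k, Nonempty (N k)]

lemma Qpol_transient
    (q : ∀ k, Matrix (N k) (N k) ℝ)
    (hnn : ∀ k i j, 0 ≤ q k i j) (hsub : ∀ k i, ∑ j, q k i j ≤ 1)
    (htr : ∀ k i j, Tendsto (fun t : ℕ => ((q k) ^ t) i j) atTop (nhds 0))
    (δ : (∀ k, N k) → Fin K) :
    ∀ s t', Tendsto (fun t : ℕ => ((Qpol q δ) ^ t) s t') atTop (nhds 0) := by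
  haveI hS : Nonempty (∀ k, N k) := ⟨fun k => Classical.arbitrary _⟩
  haveI hKne : Nonempty (Fin K) := ⟨δ (Classical.arbitrary _)⟩
  set u : ∀ k, N k → ℝ := fun k => (1 - q k)⁻¹ *ᵥ (fun _ => 1) with hudef
  have hu0 : ∀ k i, 0 ≤ u k i := fun k =>
    one_sub_inv_mulVec_nonneg (hnn k) (htr k) (fun _ => zero_le_one)
  have huq : ∀ k i, (q k *ᵥ u k) i = u k i - 1 := by
    intro k i
    have h1 : (1 - q k) *ᵥ u k = (fun _ => 1) := by
      rw [hudef]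
      rw [Matrix.mulVec_mulVec, Matrix.mul_nonsing_inv _ (isUnit_one_sub_det (htr k)),
        Matrix.one_mulVec]
    have := congrFun h1 i
    rw [Matrix.sub_mulVec, Matrix.one_mulVec] at this
    simp only [Pi.sub_apply] at this
    linarith
  have hu1 : ∀ k i, 1 ≤ u k i := by
    intro k i
    have h1 : 0 ≤ (q k *ᵥ u k) i := mulVec_nonneg (hnn k) (hu0 k) i
    have := huq k i
    linarith
  set W : (∀ k, N k) → ℝ := fun s => ∑ k, u k (s k) with hWdef
  have hWu : ∀ s k, u k (s k) ≤ W s := by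
    intro s k
    exact Finset.single_le_sum (fun k' _ => hu0 k' (s k')) (Finset.mem_univ k)
  have hW1 : ∀ s, 1 ≤ W s := by
    intro s
    obtain ⟨k⟩ := hKne
    exact le_trans (hu1 k (s k)) (hWu s k)
  obtain ⟨smax, -, hsmax⟩ :=
    Finset.exists_max_image Finset.univ W ⟨Classical.arbitrary _, Finset.mem_univ _⟩
  set M := W smax with hMdef
  have hM : ∀ s, W s ≤ M := fun s => hsmax s (Finset.mem_univ s)
  have hM1 : 1 ≤ M := hW1 smax
  have hMpos : 0 < M := lt_of_lt_of_le one_pos hM1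
  set θ : ℝ := 1 - 1 / M with hθdef
  have hθ0 : 0 ≤ θ := by
    have h : 1 / M ≤ 1 := by
      rw [div_le_one hMpos]; exact hM1
    simp only [hθdef]; linarith
  have hθ1 : θ < 1 := by
    have : 0 < 1 / M := by positivity
    simp only [hθdef]; linarith
  -- one-step Lyapunov inequality
  have key : ∀ s, (Qpol q δ *ᵥ W) s ≤ θ * W s := by
    intro s
    set k := δ s with hk
    have hupd : ∀ j : N k, W (Function.update s k j) = W s - u k (s k) + u k j := by
      intro j
      have e1 : W (Function.update s k j)
          = u k j + ∑ k' ∈ Finset.univ.erase k, u k' (s k') := by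
        show ∑ k' : Fin K, u k' (Function.update s k j k')
          = u k j + ∑ k' ∈ Finset.univ.erase k, u k' (s k')
        rw [← Finset.add_sum_erase _ (fun k' => u k' (Function.update s k j k'))
          (Finset.mem_univ k)]
        simp only [Function.update_self]
        congr 1
        apply Finset.sum_congr rfl
        intro k' hk'
        rw [Function.update_of_ne (Finset.ne_of_mem_erase hk')]
      have e2 : W s = u k (s k) + ∑ k' ∈ Finset.univ.erase k, u k' (s k') := by
        show ∑ k' : Fin K, u k' (s k') = _
        rw [← Finset.add_sum_erase _ (fun k' => u k' (s k')) (Finset.mem_univ k)]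
      rw [e1, e2]; ring
    rw [Qpol_mulVec]
    have e3 : ∑ j : N k, q k (s k) j * W (Function.update s k j)
        = (∑ j : N k, q k (s k) j) * (W s - u k (s k)) + ((u k (s k)) - 1) := by
      have : ∀ j : N k, q k (s k) j * W (Function.update s k j)
          = q k (s k) j * (W s - u k (s k)) + q k (s k) j * u k j := by
        intro j; rw [hupd j]; ring
      rw [Finset.sum_congr rfl (fun j _ => this j), Finset.sum_add_distrib,
        ← Finset.sum_mul]
      have e4 : ∑ j : N k, q k (s k) j * u k j = u k (s k) - 1 := by
        rw [← huq k (s k)]; rfl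
      rw [e4]
    rw [e3]
    have ha0 : 0 ≤ ∑ j : N k, q k (s k) j :=
      Finset.sum_nonneg fun j _ => hnn k (s k) j
    have ha1 : (∑ j : N k, q k (s k) j) ≤ 1 := hsub k (s k)
    have h5 : 0 ≤ W s - u k (s k) := sub_nonneg.2 (hWu s k)
    have h6 : (∑ j : N k, q k (s k) j) * (W s - u k (s k)) ≤ W s - u k (s k) := by
      nlinarith
    have h7 : W s - 1 ≤ θ * W s := by
      have h8 : W s / M ≤ 1 := by rw [div_le_one hMpos]; exact hM s
      have h9 : 0 ≤ W s := le_trans zero_le_one (hW1 s)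
      have : θ * W s = W s - W s / M := by
        rw [hθdef, sub_mul, one_mul, one_div, inv_mul_eq_div]
      rw [this]
      have : W s / M ≤ 1 := h8
      linarith
    linarith
  -- iterate
  have iter : ∀ t : ℕ, ∀ s, (((Qpol q δ) ^ t) *ᵥ W) s ≤ θ ^ t * W s := by
    intro t
    induction t with
    | zero => intro s; simp
    | succ t ih =>
      intro s
      have h1 : ((Qpol q δ) ^ (t + 1)) *ᵥ W = ((Qpol q δ) ^ t) *ᵥ (Qpol q δ *ᵥ W) := by
        rw [pow_succ, ← Matrix.mulVec_mulVec]
      rw [h1]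
      have h2 : ∀ s', (Qpol q δ *ᵥ W) s' ≤ θ * W s' := key
      calc (((Qpol q δ) ^ t) *ᵥ (Qpol q δ *ᵥ W)) s
          ≤ (((Qpol q δ) ^ t) *ᵥ (fun s' => θ * W s')) s :=
            mulVec_mono (matPow_nonneg (Qpol_nonneg q hnn δ) t) h2 s
        _ = θ * ((((Qpol q δ) ^ t) *ᵥ W) s) := by
            have : (fun s' => θ * W s') = θ • W := by funext s'; simp [smul_eq_mul]
            rw [this, Matrix.mulVec_smul]
            simp [smul_eq_mul]
        _ ≤ θ * (θ ^ t * W s) := by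
            exact mul_le_mul_of_nonneg_left (ih s) hθ0
        _ = θ ^ (t + 1) * W s := by ring
  intro s t'
  have hb : Tendsto (fun t : ℕ => θ ^ t * W s) atTop (nhds 0) := by
    simpa using (tendsto_pow_atTop_nhds_zero_of_lt_one hθ0 hθ1).mul_const (W s)
  refine squeeze_zero (fun t => matPow_nonneg (Qpol_nonneg q hnn δ) t s t') (fun t => ?_) hb
  · 
    have h1 : ((Qpol q δ) ^ t) s t' ≤ ((Qpol q δ) ^ t) s t' * W t' :=
      le_mul_of_one_le_right (matPow_nonneg (Qpol_nonneg q hnn δ) t s t') (hW1 t')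
    have h2 : ((Qpol q δ) ^ t) s t' * W t' ≤ (((Qpol q δ) ^ t) *ᵥ W) s := by
      apply Finset.single_le_sum (f := fun t'' => ((Qpol q δ) ^ t) s t'' * W t'')
        (fun t'' _ => mul_nonneg (matPow_nonneg (Qpol_nonneg q hnn δ) t s t'')
          (le_trans zero_le_one (hW1 t''))) (Finset.mem_univ t')
    exact le_trans h1 (le_trans h2 (iter t s))

end Bandit3

section Bandit4

variable {K : ℕ} {N : Fin K → Type*} [∀ k, Fintype (N k)] [∀ k, DecidableEq (N k)]
  [∀ k, Nonempty (N k)]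

/-- One-step lookahead value of playing bandit `k` at multi-state `s`, then receiving `V`. -/
noncomputable def Bval (q : ∀ k, Matrix (N k) (N k) ℝ) (r : ∀ k, N k → ℝ)
    (V : (∀ k, N k) → ℝ) (s : ∀ k, N k) (k : Fin K) : ℝ :=
  r k (s k) + ∑ j, q k (s k) j * V (Function.update s k j)

variable (q : ∀ k, Matrix (N k) (N k) ℝ) (r : ∀ k, N k → ℝ)
  (hnn : ∀ k i j, 0 ≤ q k i j)
  (hsub : ∀ k i, ∑ j, q k i j ≤ 1)
  (htr : ∀ k i j, Tendsto (fun t : ℕ => ((q k) ^ t) i j) atTop (nhds 0))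

include hnn hsub htr

lemma Vpol_bellman (δ : (∀ k, N k) → Fin K) (s : ∀ k, N k) :
    Vpol q r δ s = Bval q r (Vpol q r δ) s (δ s) := by
  have hdet : IsUnit (1 - Qpol q δ).det :=
    isUnit_one_sub_det (fun i j => Qpol_transient q hnn hsub htr δ i j)
  have h1 : (1 - Qpol q δ) *ᵥ Vpol q r δ = Rpol r δ := by
    unfold Vpol
    rw [Matrix.mulVec_mulVec, Matrix.mul_nonsing_inv _ hdet, Matrix.one_mulVec]
  have h2 := congrFun h1 s
  rw [Matrix.sub_mulVec, Matrix.one_mulVec] at h2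
  simp only [Pi.sub_apply] at h2
  have h3 := Qpol_mulVec q δ (Vpol q r δ) s
  unfold Bval Rpol at *
  linarith [h3 ▸ h2]

/-- If `V` dominates its one-step lookahead along `δ'`, then `V` dominates `V^{δ'}`. -/
lemma Vpol_le_of_superharmonic (V : (∀ k, N k) → ℝ) (δ' : (∀ k, N k) → Fin K)
    (hV : ∀ s, Bval q r V s (δ' s) ≤ V s) :
    ∀ s, Vpol q r δ' s ≤ V s := by
  have hQt : ∀ i j, Tendsto (fun t : ℕ => ((Qpol q δ') ^ t) i j) atTop (nhds 0) :=
    Qpol_transient q hnn hsub htr δ'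
  have hdet : IsUnit (1 - Qpol q δ').det := isUnit_one_sub_det hQt
  set e : (∀ k, N k) → ℝ := fun s => V s - Bval q r V s (δ' s) with hedef
  have he0 : ∀ s, 0 ≤ e s := fun s => sub_nonneg.2 (hV s)
  have h1 : (1 - Qpol q δ') *ᵥ V = Rpol r δ' + e := by
    funext s
    rw [Matrix.sub_mulVec, Matrix.one_mulVec]
    simp only [Pi.sub_apply, Pi.add_apply, hedef]
    rw [Qpol_mulVec q δ' V s]
    unfold Bval Rpol
    ring
  have h2 : V = Vpol q r δ' + (1 - Qpol q δ')⁻¹ *ᵥ e := by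
    have h3 : (1 - Qpol q δ')⁻¹ *ᵥ ((1 - Qpol q δ') *ᵥ V) = V := by
      rw [Matrix.mulVec_mulVec, Matrix.nonsing_inv_mul _ hdet, Matrix.one_mulVec]
    rw [← h3, h1, Matrix.mulVec_add]
    rfl
  intro s
  have h4 := congrFun h2 s
  simp only [Pi.add_apply] at h4
  have h5 : 0 ≤ ((1 - Qpol q δ')⁻¹ *ᵥ e) s :=
    one_sub_inv_mulVec_nonneg (Qpol_nonneg q hnn δ') hQt he0 s
  linarith

/-- Policy improvement: a strictly improving one-step deviation at `s1` yields a policy that is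
at least as good everywhere and strictly better at `s1`. -/
lemma Vpol_improve (δ : (∀ k, N k) → Fin K) (s1 : ∀ k, N k) (k1 : Fin K)
    (hB : Vpol q r δ s1 < Bval q r (Vpol q r δ) s1 k1) :
    (∀ s, Vpol q r δ s ≤ Vpol q r (Function.update δ s1 k1) s) ∧
      Vpol q r δ s1 < Vpol q r (Function.update δ s1 k1) s1 := by
  set δ'' := Function.update δ s1 k1 with hδdef
  have hQt : ∀ i j, Tendsto (fun t : ℕ => ((Qpol q δ'') ^ t) i j) atTop (nhds 0) :=
    Qpol_transient q hnn hsub htr δ''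
  have hdet : IsUnit (1 - Qpol q δ'').det := isUnit_one_sub_det hQt
  set V := Vpol q r δ with hVdef
  set e : (∀ k, N k) → ℝ := fun s => Bval q r V s (δ'' s) - V s with hedef
  have he0 : ∀ s, 0 ≤ e s := by
    intro s
    rcases eq_or_ne s s1 with rfl | hne
    · have : δ'' s = k1 := Function.update_self _ _ _
      simp only [hedef, this]
      linarith
    · have hδs : δ'' s = δ s := Function.update_of_ne hne _ _
      simp only [hedef, hδs]
      rw [← Vpol_bellman q r hnn hsub htr δ s]
      simp
      exact le_rfl
  have hes1 : 0 < e s1 := by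
    have : δ'' s1 = k1 := Function.update_self _ _ _
    simp only [hedef, this]
    linarith
  have h1 : (1 - Qpol q δ'') *ᵥ V = Rpol r δ'' - e := by
    funext s
    rw [Matrix.sub_mulVec, Matrix.one_mulVec]
    simp only [Pi.sub_apply, hedef]
    rw [Qpol_mulVec q δ'' V s]
    unfold Bval Rpol
    ring
  have h2 : V = Vpol q r δ'' - (1 - Qpol q δ'')⁻¹ *ᵥ e := by
    have h3 : (1 - Qpol q δ'')⁻¹ *ᵥ ((1 - Qpol q δ'') *ᵥ V) = V := by
      rw [Matrix.mulVec_mulVec, Matrix.nonsing_inv_mul _ hdet, Matrix.one_mulVec]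
    rw [← h3, h1, Matrix.mulVec_sub]
    rfl
  set d := (1 - Qpol q δ'')⁻¹ *ᵥ e with hddef
  have hd0 : ∀ s, 0 ≤ d s :=
    one_sub_inv_mulVec_nonneg (Qpol_nonneg q hnn δ'') hQt he0
  have hle : ∀ s, V s ≤ Vpol q r δ'' s := by
    intro s
    have h4 := congrFun h2 s
    simp only [Pi.sub_apply] at h4
    linarith [hd0 s]
  refine ⟨hle, ?_⟩
  -- strictness at s1
  have h5 : (1 - Qpol q δ'') *ᵥ d = e := by
    rw [hddef, Matrix.mulVec_mulVec, Matrix.mul_nonsing_inv _ hdet, Matrix.one_mulVec]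
  have h6 := congrFun h5 s1
  rw [Matrix.sub_mulVec, Matrix.one_mulVec] at h6
  simp only [Pi.sub_apply] at h6
  have h7 : 0 ≤ (Qpol q δ'' *ᵥ d) s1 := mulVec_nonneg (Qpol_nonneg q hnn δ'') hd0 s1
  have h8 : e s1 ≤ d s1 := by linarith
  have h9 := congrFun h2 s1
  simp only [Pi.sub_apply] at h9
  linarith

end Bandit4


/-- under Hypothesis RN, if state `i0` of bandit `k0` is weakly preferable to
every other state, then there is an optimal stationary nonrandomized policy that plays
bandit `k0` at every multi-state containing `i0`. -/
theorem optimal_to_play_weakly_preferred {K : ℕ} (N : Fin K → Type*)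
    [∀ k, Fintype (N k)] [∀ k, DecidableEq (N k)] [∀ k, Nonempty (N k)]
    (q : ∀ k, Matrix (N k) (N k) ℝ) (r : ∀ k, N k → ℝ)
    (hnn : ∀ k i j, 0 ≤ q k i j)
    (hsub : ∀ k i, ∑ j, q k i j ≤ 1)
    (htr : ∀ k i j, Tendsto (fun t : ℕ => ((q k) ^ t) i j) atTop (nhds 0))
    (k0 : Fin K) (i0 : N k0)
    (hpref : ∀ x : Σ k, N k, x ≠ ⟨k0, i0⟩ → WeaklyPrefS q r ⟨k0, i0⟩ x) :
    ∃ δ : (∀ k, N k) → Fin K,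
      (∀ s, Vpol q r δ s = ⨆ δ' : (∀ k, N k) → Fin K, Vpol q r δ' s) ∧
      (∀ s : ∀ k, N k, s k0 = i0 → δ s = k0) := by
  classical
  -- the set of policies playing k0 at i0-states
  set D0 : Finset ((∀ k, N k) → Fin K) :=
    Finset.univ.filter (fun δ => ∀ s, s k0 = i0 → δ s = k0) with hD0
  have hD0ne : D0.Nonempty := by
    refine ⟨fun _ => k0, ?_⟩
    simp [hD0]
  obtain ⟨δm, hδmem, hδmax⟩ :=
    Finset.exists_max_image D0 (fun δ => ∑ s, Vpol q r δ s) hD0ne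
  have hmem : ∀ s, s k0 = i0 → δm s = k0 := by
    have := Finset.mem_filter.1 hδmem
    simpa [hD0] using this.2
  set V : (∀ k, N k) → ℝ := Vpol q r δm with hVdef
  -- no improving single-site deviation that stays in D0
  have himp : ∀ (s1 : ∀ k, N k) (k1 : Fin K),
      (∀ s, s k0 = i0 → (Function.update δm s1 k1) s = k0) →
      Bval q r V s1 k1 ≤ V s1 := by
    intro s1 k1 hmem''
    by_contra h
    push_neg at h
    obtain ⟨hle, hlt⟩ := Vpol_improve q r hnn hsub htr δm s1 k1 h
    have hmemD : Function.update δm s1 k1 ∈ D0 := by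
      simp only [hD0, Finset.mem_filter, Finset.mem_univ, true_and]
      exact hmem''
    have hsum : ∑ s, V s < ∑ s, Vpol q r (Function.update δm s1 k1) s :=
      Finset.sum_lt_sum (fun s _ => hle s) ⟨s1, Finset.mem_univ _, hlt⟩
    exact absurd (hδmax _ hmemD) (not_le.2 hsum)
  -- no improvement at non-i0 states
  have hNI1 : ∀ s k1, s k0 ≠ i0 → Bval q r V s k1 ≤ V s := by
    intro s k1 hs
    apply himp
    intro s' hs'
    have hne : s' ≠ s := by
      intro h; exact hs (h ▸ hs')
    rw [Function.update_of_ne hne]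
    exact hmem s' hs'
  -- no improvement by playing k0 at i0-states
  have hNI2 : ∀ s, s k0 = i0 → Bval q r V s k0 ≤ V s := by
    intro s hs
    apply himp
    intro s' hs'
    rcases eq_or_ne s' s with rfl | hne
    · rw [Function.update_self]
    · rw [Function.update_of_ne hne]
      exact hmem s' hs'
  -- q k0 i0 i0 < 1
  have hc0 : 0 ≤ q k0 i0 i0 := hnn k0 i0 i0
  have hc : q k0 i0 i0 < 1 := by
    by_contra h
    push_neg at h
    have hpow : ∀ t : ℕ, (q k0 i0 i0) ^ t ≤ ((q k0) ^ t) i0 i0 := by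
      intro t
      induction t with
      | zero => simp
      | succ t ih =>
        rw [pow_succ, pow_succ, Matrix.mul_apply]
        have h1 : ((q k0) ^ t) i0 i0 * q k0 i0 i0
            ≤ ∑ j, ((q k0) ^ t) i0 j * q k0 j i0 :=
          Finset.single_le_sum (f := fun j => ((q k0) ^ t) i0 j * q k0 j i0)
            (fun j _ => mul_nonneg (matPow_nonneg (hnn k0) t i0 j) (hnn k0 j i0))
            (Finset.mem_univ i0)
        have h2 : (q k0 i0 i0) ^ t * q k0 i0 i0 ≤ ((q k0) ^ t) i0 i0 * q k0 i0 i0 :=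
          mul_le_mul_of_nonneg_right ih hc0
        linarith
    have hone : ∀ t : ℕ, (1 : ℝ) ≤ ((q k0) ^ t) i0 i0 := by
      intro t
      exact le_trans (one_le_pow₀ h) (hpow t)
    have := ge_of_tendsto (htr k0 i0 i0) (Filter.Eventually.of_forall hone)
    linarith
  -- the interchange argument at i0-states
  have hinter : ∀ s, s k0 = i0 → ∀ k1, k1 ≠ k0 → Bval q r V s k1 ≤ V s := by
    intro s hs k1 hk1
    have hk0k1 : k0 ≠ k1 := Ne.symm hk1
    set y := s k1 with hy
    set c := q k0 i0 i0 with hcdef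
    set ai := ∑ j0, q k0 i0 j0 with haidef
    set ay := ∑ j1, q k1 y j1 with haydef
    set C := ∑ j1, ∑ j0, q k1 y j1 * q k0 i0 j0
        * V (Function.update (Function.update s k1 j1) k0 j0) with hCdef
    set T := ∑ j0, q k0 i0 j0 * Bval q r V (Function.update s k0 j0) k1 with hTdef
    -- Bellman at the neighbours in direction k1
    have hin : ∀ j1 : N k1,
        V (Function.update s k1 j1)
          = r k0 i0 + ∑ j0, q k0 i0 j0
              * V (Function.update (Function.update s k1 j1) k0 j0) := by
      intro j1
      have hupdk0 : (Function.update s k1 j1) k0 = i0 := by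
        rw [Function.update_of_ne hk0k1]; exact hs
      have hδ : δm (Function.update s k1 j1) = k0 := hmem _ hupdk0
      have hbel := Vpol_bellman q r hnn hsub htr δm (Function.update s k1 j1)
      rw [hδ] at hbel
      unfold Bval at hbel
      rw [hupdk0] at hbel
      exact hbel
    -- expansion of Bval q r V s k1
    have hW'eq : Bval q r V s k1 = r k1 y + ay * r k0 i0 + C := by
      unfold Bval
      rw [show s k1 = y from rfl]
      calc r k1 y + ∑ j1, q k1 y j1 * V (Function.update s k1 j1)
          = r k1 y + ∑ j1, (q k1 y j1 * r k0 i0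
              + ∑ j0, q k1 y j1 * (q k0 i0 j0
                * V (Function.update (Function.update s k1 j1) k0 j0))) := by
            congr 1
            refine Finset.sum_congr rfl fun j1 _ => ?_
            rw [hin j1, mul_add, Finset.mul_sum]
        _ = r k1 y + ay * r k0 i0 + C := by
            rw [Finset.sum_add_distrib, ← Finset.sum_mul, hCdef]
            have : ∀ j1 : N k1, ∑ j0, q k1 y j1 * (q k0 i0 j0
                * V (Function.update (Function.update s k1 j1) k0 j0))
                = ∑ j0, q k1 y j1 * q k0 i0 j0
                  * V (Function.update (Function.update s k1 j1) k0 j0) := by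
              intro j1
              exact Finset.sum_congr rfl fun j0 _ => by ring
            rw [Finset.sum_congr rfl fun j1 _ => this j1]
            ring
    -- expansion of T
    have hTeq : T = ai * r k1 y + C := by
      have h1 : ∀ j0 : N k0, Bval q r V (Function.update s k0 j0) k1
          = r k1 y + ∑ j1, q k1 y j1
              * V (Function.update (Function.update s k1 j1) k0 j0) := by
        intro j0
        unfold Bval
        have h2 : (Function.update s k0 j0) k1 = y := Function.update_of_ne hk1 _ _
        rw [h2]
        congr 1
        refine Finset.sum_congr rfl fun j1 _ => ?_
        rw [Function.update_comm hk1]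
      calc T = ∑ j0, (q k0 i0 j0 * r k1 y + ∑ j1, q k0 i0 j0 * (q k1 y j1
            * V (Function.update (Function.update s k1 j1) k0 j0))) := by
            refine Finset.sum_congr rfl fun j0 _ => ?_
            rw [h1 j0, mul_add, Finset.mul_sum]
        _ = ai * r k1 y + C := by
            rw [Finset.sum_add_distrib, ← Finset.sum_mul, hCdef, Finset.sum_comm]
            congr 1
            refine Finset.sum_congr rfl fun j1 _ => Finset.sum_congr rfl fun j0 _ => by ring
    -- the preference inequality
    have hprefineq : r k1 y + ay * r k0 i0 ≤ r k0 i0 + ai * r k1 y := by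
      have hne : (⟨k1, y⟩ : Σ k, N k) ≠ ⟨k0, i0⟩ := by
        intro h
        exact hk1 (congrArg Sigma.fst h)
      have := hpref ⟨k1, y⟩ hne
      unfold WeaklyPrefS amplS at this
      simp only at this
      rcases this with h | ⟨h, -⟩
      · exact le_of_lt h
      · exact le_of_eq h.symm
    -- split sums at i0
    have hss : Function.update s k0 i0 = s := by
      nth_rewrite 1 [← hs]
      exact Function.update_eq_self k0 s
    have hsplit1 : T = c * Bval q r V s k1
        + ∑ j0 ∈ Finset.univ.erase i0, q k0 i0 j0
            * Bval q r V (Function.update s k0 j0) k1 := by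
      rw [hTdef, ← Finset.add_sum_erase _ _ (Finset.mem_univ i0), hss]
    have hbel := Vpol_bellman q r hnn hsub htr δm s
    rw [hmem s hs] at hbel
    unfold Bval at hbel
    rw [hs] at hbel
    have hsplit2 : V s = r k0 i0 + (c * V s
        + ∑ j0 ∈ Finset.univ.erase i0, q k0 i0 j0 * V (Function.update s k0 j0)) := by
      have h1 : ∑ j : N k0, q k0 i0 j * Vpol q r δm (Function.update s k0 j)
          = q k0 i0 i0 * Vpol q r δm s
            + ∑ j0 ∈ Finset.univ.erase i0, q k0 i0 j0
                * Vpol q r δm (Function.update s k0 j0) := by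
        rw [← Finset.add_sum_erase _ (fun j => q k0 i0 j * Vpol q r δm (Function.update s k0 j))
          (Finset.mem_univ i0), hss]
      rw [h1] at hbel
      exact hbel
    -- bound off-diagonal terms with hNI1
    have hbound : ∑ j0 ∈ Finset.univ.erase i0, q k0 i0 j0
          * Bval q r V (Function.update s k0 j0) k1
        ≤ ∑ j0 ∈ Finset.univ.erase i0, q k0 i0 j0 * V (Function.update s k0 j0) := by
      refine Finset.sum_le_sum fun j0 hj0 => ?_
      have hj0ne : j0 ≠ i0 := Finset.ne_of_mem_erase hj0
      have hupd : (Function.update s k0 j0) k0 ≠ i0 := by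
        rw [Function.update_self]; exact hj0ne
      exact mul_le_mul_of_nonneg_left (hNI1 _ k1 hupd) (hnn k0 i0 j0)
    -- assemble
    by_contra hgt
    push_neg at hgt
    have hchain : Bval q r V s k1 ≤ r k0 i0 + c * Bval q r V s k1
        + ∑ j0 ∈ Finset.univ.erase i0, q k0 i0 j0 * V (Function.update s k0 j0) := by
      calc Bval q r V s k1 = r k1 y + ay * r k0 i0 + C := hW'eq
        _ ≤ r k0 i0 + ai * r k1 y + C := by linarith
        _ = r k0 i0 + T := by rw [hTeq]; ring
        _ = r k0 i0 + c * Bval q r V s k1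
            + ∑ j0 ∈ Finset.univ.erase i0, q k0 i0 j0
                * Bval q r V (Function.update s k0 j0) k1 := by rw [hsplit1]; ring
        _ ≤ _ := by linarith
    have hd : 0 < Bval q r V s k1 - V s := sub_pos.2 hgt
    have hmul : c * (Bval q r V s k1 - V s) < 1 * (Bval q r V s k1 - V s) :=
      mul_lt_mul_of_pos_right hc hd
    rw [one_mul] at hmul
    have : Bval q r V s k1 - V s ≤ c * (Bval q r V s k1 - V s) := by
      have h2 := hsplit2
      nlinarith [hchain, h2]
    linarith
  -- all one-step deviations are dominated
  have hAll : ∀ s k1, Bval q r V s k1 ≤ V s := by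
    intro s k1
    rcases eq_or_ne (s k0) i0 with hs | hs
    · rcases eq_or_ne k1 k0 with rfl | hk1
      · exact hNI2 s hs
      · exact hinter s hs k1 hk1
    · exact hNI1 s k1 hs
  have hdom : ∀ δ' s, Vpol q r δ' s ≤ V s := fun δ' =>
    Vpol_le_of_superharmonic q r hnn hsub htr V δ' (fun s => hAll s (δ' s))
  haveI : Nonempty ((∀ k, N k) → Fin K) := ⟨fun _ => k0⟩
  refine ⟨δm, fun s => ?_, hmem⟩
  apply le_antisymm
  · exact le_ciSup (Set.Finite.bddAbove (Set.finite_range fun δ' => Vpol q r δ' s)) δm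
  · exact ciSup_le fun δ' => hdom δ' s
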